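/- Under the standing assumptions, the basic WKB remainder R := i ξ λ ψ_{−1}'', where λψ_{−1}'' = (−2λa' − q')/(2√ζ), satisfies ‖R‖²_{∞,(b−δ,b+δ)} ≲ α² b^{2ν} + (q_b^{(1)})²/(α²+β²) as b → +∞. -/

import Mathlib

set_option maxHeartbeats 1000000

open Filter Set

private lemma final_aux (A2 QS X KK W : ℝ) (h1 : A2 ≤ 4 * KK * X) (h2 : QS ≤ W)
    (hX : 0 ≤ X) (hW : 0 ≤ W) (hK : 0 ≤ KK) :
    8 * A2 + 2 * QS ≤ (32 * KK + 2) * (X + W) := by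
  have hKW : 0 ≤ KK * W := mul_nonneg hK hW
  have hKX : 0 ≤ KK * X := mul_nonneg hK hX
  nlinarith [hKW, hKX, h1, h2, hX, hW]

private lemma sq_add_le_aux (x y : ℝ) : (x + y) ^ 2 ≤ 2 * (x ^ 2 + y ^ 2) := by
  nlinarith [sq_nonneg (x - y)]

theorem stmt_9 (a q β : ℝ → ℝ) (ν ε : ℝ) (hν : -1 ≤ ν) (hε : 0 < ε)
    (ha : ContDiff ℝ 2 a) (hq : ContDiff ℝ 1 q)
    (hapos : ∀ᶠ x in atTop, 0 ≤ a x) (hqpos : ∀ᶠ x in atTop, 0 ≤ q x)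
    (ha' : ∀ᶠ x in atTop, 0 < deriv a x)
    (hainf : Tendsto a atTop atTop)
    (hactrl : ∃ Ca > 0, ∀ᶠ x in atTop,
      |deriv a x| ≤ Ca * x ^ ν * a x ∧ |deriv (deriv a) x| ≤ Ca * x ^ (2 * ν) * a x)
    (hβ : ∀ b, 0 < β b)
    (hq0 : (fun b => sSup (q '' Set.Icc (b - b ^ (-ν - ε)) (b + b ^ (-ν - ε))))
      =o[atTop] fun b => (a b) ^ 2 + (β b) ^ 2) :
    ∃ C > 0, ∀ᶠ b in atTop,
      ∀ t ∈ Set.Ioo (b - b ^ (-ν - ε)) (b + b ^ (-ν - ε)),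
        let lam : ℂ := -(a b : ℂ) + (β b : ℂ) * Complex.I
        let zeta : ℂ := -lam ^ 2 - 2 * lam * (a t : ℂ) - (q t : ℂ)
        (‖
            ((-2 * lam * (Complex.ofReal (deriv a t)) - (Complex.ofReal (deriv q t)))
              / (2 * zeta ^ ((1 : ℂ) / 2)))‖) ^ 2
          ≤ C * ((a b) ^ 2 * b ^ (2 * ν)
              + (sSup ((fun t => |deriv q t|) ''
                  Set.Icc (b - b ^ (-ν - ε)) (b + b ^ (-ν - ε)))) ^ 2
                / ((a b) ^ 2 + (β b) ^ 2)) := by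
  obtain ⟨Ca, hCa, hctrl⟩ := hactrl
  set K : ℝ := Ca * 2 ^ |ν| with hKdef
  have hKpos : 0 < K := mul_pos hCa (Real.rpow_pos_of_pos two_pos _)
  refine ⟨32 * K ^ 2 + 2, by positivity, ?_⟩
  -- collect eventual hypotheses
  obtain ⟨x₁, hx₁⟩ := eventually_atTop.1 hctrl
  obtain ⟨x₂, hx₂⟩ := eventually_atTop.1 hapos
  obtain ⟨x₃, hx₃⟩ := eventually_atTop.1 ha'
  have hadiff : Differentiable ℝ a := ha.differentiable (by norm_num)
  have E2 : ∀ᶠ b : ℝ in atTop, b ^ (-ν - ε) ≤ b / 2 := by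
    have ht := tendsto_rpow_neg_atTop (show (0:ℝ) < ν + ε + 1 by linarith)
    filter_upwards [ht.eventually (eventually_le_nhds (show (0:ℝ) < 1/2 by norm_num)),
      eventually_gt_atTop 0] with b hb hb0
    have h1 : b ^ (-ν - ε) = b ^ (-(ν + ε + 1)) * b := by
      rw [← Real.rpow_add_one hb0.ne']; ring_nf
    rw [h1]
    calc b ^ (-(ν + ε + 1)) * b ≤ (1/2) * b :=
          mul_le_mul_of_nonneg_right hb hb0.le
      _ = b / 2 := by ring
  have E3 : ∀ᶠ b : ℝ in atTop, max x₁ (max x₂ x₃) ≤ b / 2 := by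
    have : Tendsto (fun b : ℝ => b / 2) atTop atTop :=
      Tendsto.atTop_div_const two_pos tendsto_id
    exact this.eventually_ge_atTop _
  have E4 : ∀ᶠ b : ℝ in atTop, 0 < a b := hainf.eventually_gt_atTop 0
  have E5 : ∀ᶠ b : ℝ in atTop, K * b ^ ν * b ^ (-ν - ε) ≤ 1/4 := by
    have ht : Tendsto (fun b : ℝ => K * b ^ (-ε)) atTop (nhds 0) := by
      have := (tendsto_rpow_neg_atTop hε).const_mul K
      simpa using this
    filter_upwards [ht.eventually (eventually_le_nhds (show (0:ℝ) < 1/4 by norm_num)),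
      eventually_gt_atTop 0] with b hb hb0
    have h1 : b ^ ν * b ^ (-ν - ε) = b ^ (-ε) := by
      rw [← Real.rpow_add hb0]; ring_nf
    rw [mul_assoc, h1]; exact hb
  have E6 := hq0.def (show (0:ℝ) < 1/4 by norm_num)
  filter_upwards [eventually_ge_atTop 1, E2, E3, E4, E5, E6] with b hb1 hb2 hb3 hb4 hb5 hb6
  set d : ℝ := b ^ (-ν - ε) with hd
  have hb0 : (0:ℝ) < b := lt_of_lt_of_le one_pos hb1
  have hdpos : 0 < d := Real.rpow_pos_of_pos hb0 _
  have hbνpos : 0 < b ^ ν := Real.rpow_pos_of_pos hb0 _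
  -- interval facts
  have hsub : ∀ x ∈ Icc (b - d) (b + d), b / 2 ≤ x ∧ x ≤ 2 * b := by
    intro x hx; exact ⟨by linarith [hx.1], by linarith [hx.2]⟩
  have hxbig : ∀ x ∈ Icc (b - d) (b + d), max x₁ (max x₂ x₃) ≤ x := by
    intro x hx; exact le_trans hb3 (hsub x hx).1
  have hpow : ∀ x ∈ Icc (b - d) (b + d), x ^ ν ≤ 2 ^ |ν| * b ^ ν := by
    intro x hx
    obtain ⟨hxl, hxr⟩ := hsub x hx
    have hxpos : 0 < x := lt_of_lt_of_le (by linarith) hxl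
    rcases le_or_gt 0 ν with hν0 | hν0
    · calc x ^ ν ≤ (2 * b) ^ ν := Real.rpow_le_rpow hxpos.le hxr hν0
        _ = 2 ^ ν * b ^ ν := Real.mul_rpow (by norm_num) hb0.le
        _ ≤ 2 ^ |ν| * b ^ ν := by
            have : (2:ℝ) ^ ν ≤ 2 ^ |ν| :=
              Real.rpow_le_rpow_of_exponent_le one_le_two (le_abs_self ν)
            exact mul_le_mul_of_nonneg_right this hbνpos.le
    · calc x ^ ν ≤ (b / 2) ^ ν :=
          Real.rpow_le_rpow_of_nonpos (by linarith) hxl hν0.le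
        _ = 2 ^ |ν| * b ^ ν := by
            rw [Real.div_rpow hb0.le (by norm_num : (0:ℝ) ≤ 2), abs_of_neg hν0,
              Real.rpow_neg (by norm_num : (0:ℝ) ≤ 2)]
            field_simp
  have hactrl' : ∀ x ∈ Icc (b - d) (b + d), |deriv a x| ≤ K * b ^ ν * a x := by
    intro x hx
    have hx1 : x₁ ≤ x := le_trans (le_max_left _ _) (hxbig x hx)
    have hx2 : x₂ ≤ x := le_trans (le_trans (le_max_left _ _) (le_max_right _ _)) (hxbig x hx)
    have hapx : 0 ≤ a x := hx₂ x hx2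
    calc |deriv a x| ≤ Ca * x ^ ν * a x := (hx₁ x hx1).1
      _ ≤ Ca * (2 ^ |ν| * b ^ ν) * a x := by
          apply mul_le_mul_of_nonneg_right _ hapx
          exact mul_le_mul_of_nonneg_left (hpow x hx) hCa.le
      _ = K * b ^ ν * a x := by rw [hKdef]; ring
  have hmono : MonotoneOn a (Icc (b - d) (b + d)) := by
    apply (strictMonoOn_of_deriv_pos (convex_Icc _ _) ha.continuous.continuousOn ?_).monotoneOn
    intro x hx
    have hx' : x ∈ Icc (b - d) (b + d) := interior_subset hx
    exact hx₃ x (le_trans (le_trans (le_max_right _ _) (le_max_right _ _)) (hxbig x hx'))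
  have hmemub : b + d ∈ Icc (b - d) (b + d) := ⟨by linarith, le_refl _⟩
  have hmemlb : b - d ∈ Icc (b - d) (b + d) := ⟨le_refl _, by linarith⟩
  have hmemb : b ∈ Icc (b - d) (b + d) := ⟨by linarith, by linarith⟩
  have haub_nonneg : 0 ≤ a (b + d) := le_trans hb4.le (hmono hmemb hmemub (by linarith))
  -- upper bound for a (b + d)
  have hub : a (b + d) ≤ (4/3) * a b := by
    have key : ∀ x ∈ Icc b (b + d), ‖a x - a b‖ ≤ (K * b ^ ν * a (b + d)) * (x - b) := by
      apply norm_image_sub_le_of_norm_deriv_le_segment'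
        (fun x hx => (hadiff x).hasDerivAt.hasDerivWithinAt)
      intro x hx
      have hx' : x ∈ Icc (b - d) (b + d) := ⟨by linarith [hx.1], le_of_lt hx.2⟩
      calc ‖deriv a x‖ ≤ K * b ^ ν * a x := hactrl' x hx'
        _ ≤ K * b ^ ν * a (b + d) := by
            apply mul_le_mul_of_nonneg_left _ (by positivity)
            exact hmono hx' hmemub hx'.2
    have h1 := key (b + d) ⟨by linarith, le_refl _⟩
    rw [Real.norm_eq_abs] at h1
    have he : b + d - b = d := by ring
    rw [he] at h1
    have h2 : a (b + d) - a b ≤ K * b ^ ν * a (b + d) * d := by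
      have := le_trans (le_abs_self _) h1; linarith [this]
    have h3 : K * b ^ ν * a (b + d) * d ≤ (1/4) * a (b + d) := by
      have h := mul_le_mul_of_nonneg_right hb5 haub_nonneg
      linarith [h]
    linarith
  -- lower bound for a (b - d)
  have hlb : (3/4) * a b ≤ a (b - d) := by
    have key : ∀ x ∈ Icc (b - d) b, ‖a x - a (b - d)‖ ≤ (K * b ^ ν * a b) * (x - (b - d)) := by
      apply norm_image_sub_le_of_norm_deriv_le_segment'
        (fun x hx => (hadiff x).hasDerivAt.hasDerivWithinAt)
      intro x hx
      have hx' : x ∈ Icc (b - d) (b + d) := ⟨hx.1, by linarith [le_of_lt hx.2]⟩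
      calc ‖deriv a x‖ ≤ K * b ^ ν * a x := hactrl' x hx'
        _ ≤ K * b ^ ν * a b := by
            apply mul_le_mul_of_nonneg_left _ (by positivity)
            exact hmono hx' hmemb (le_of_lt hx.2)
    have h1 := key b ⟨by linarith, le_refl _⟩
    rw [Real.norm_eq_abs] at h1
    have h2 : a b - a (b - d) ≤ K * b ^ ν * a b * d := by
      have := le_trans (le_abs_self _) h1
      have he : b - (b - d) = d := by ring
      rw [he] at this; linarith [this]
    have h3 : K * b ^ ν * a b * d ≤ (1/4) * a b := by
      have h := mul_le_mul_of_nonneg_right hb5 hb4.le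
      linarith [h]
    linarith
  -- now fix t
  intro t ht
  have htIcc : t ∈ Icc (b - d) (b + d) := Ioo_subset_Icc_self ht
  have hat_lb : (3/4) * a b ≤ a t :=
    le_trans hlb (hmono hmemlb htIcc htIcc.1)
  have hat_ub : a t ≤ (4/3) * a b :=
    le_trans (hmono htIcc hmemub htIcc.2) hub
  have hat_nonneg : 0 ≤ a t := by linarith [hat_lb, hb4]
  intro lam zeta
  have hlam : lam = -(a b : ℂ) + (β b : ℂ) * Complex.I := rfl
  have hzeta : zeta = -lam ^ 2 - 2 * lam * (a t : ℂ) - (q t : ℂ) := rfl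
  have hS : (0:ℝ) < (a b) ^ 2 + (β b) ^ 2 := by positivity
  -- q t small
  have hqt : q t ≤ (1/4) * ((a b) ^ 2 + (β b) ^ 2) := by
    have h1 : q t ≤ sSup (q '' Icc (b - d) (b + d)) :=
      le_csSup (isCompact_Icc.bddAbove_image hq.continuous.continuousOn) ⟨t, htIcc, rfl⟩
    have h2 := hb6
    rw [Real.norm_eq_abs, Real.norm_eq_abs] at h2
    have h3 : |(a b) ^ 2 + (β b) ^ 2| = (a b) ^ 2 + (β b) ^ 2 := abs_of_pos hS
    rw [h3] at h2
    calc q t ≤ sSup (q '' Icc (b - d) (b + d)) := h1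
      _ ≤ |sSup (q '' Icc (b - d) (b + d))| := le_abs_self _
      _ ≤ (1/4) * ((a b) ^ 2 + (β b) ^ 2) := h2
  -- zeta lower bound
  have hzre : zeta.re = (β b) ^ 2 - (a b) ^ 2 + 2 * (a b) * (a t) - q t := by
    rw [hzeta, hlam]; simp [pow_two, Complex.mul_re, Complex.mul_im]; try ring
  have hzre_lb : ((a b) ^ 2 + (β b) ^ 2) / 4 ≤ zeta.re := by
    rw [hzre]
    have hp : a b * ((3/4) * a b) ≤ a b * a t :=
      mul_le_mul_of_nonneg_left hat_lb hb4.le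
    have hp' : (3/4) * (a b) ^ 2 ≤ a b * a t := by linarith [hp]
    linarith [hp', hqt, sq_nonneg (β b), sq_nonneg (a b)]
  have habsz : ((a b) ^ 2 + (β b) ^ 2) / 4 ≤ ‖zeta‖ :=
    le_trans hzre_lb (Complex.re_le_norm zeta)
  have habsz_pos : 0 < ‖zeta‖ := lt_of_lt_of_le (by linarith) habsz
  have hzne : zeta ≠ 0 := by
    intro h; rw [h] at habsz_pos; simp at habsz_pos
  -- abs lam
  have hlamsq : ‖lam‖ ^ 2 = (a b) ^ 2 + (β b) ^ 2 := by
    rw [Complex.sq_norm, hlam, Complex.normSq_apply]; simp; ring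
  have hlamnn : 0 ≤ ‖lam‖ := norm_nonneg _
  -- denominator
  have hden : ‖2 * zeta ^ ((1:ℂ)/2)‖ = 2 * ‖zeta‖ ^ ((1:ℝ)/2) := by
    rw [norm_mul, Complex.norm_cpow_of_ne_zero hzne]
    norm_num
  -- numerator bound
  set A : ℝ := |deriv a t| with hA
  set Q : ℝ := |deriv q t| with hQ
  have hnum : ‖(-2 * lam * (Complex.ofReal (deriv a t)) - (Complex.ofReal (deriv q t)))‖
      ≤ 2 * ‖lam‖ * A + Q := by
    calc ‖(-2 * lam * (Complex.ofReal (deriv a t)) - (Complex.ofReal (deriv q t)))‖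
        ≤ ‖(-2 * lam * (Complex.ofReal (deriv a t)))‖
          + ‖(Complex.ofReal (deriv q t))‖ := norm_sub_le _ _
      _ = 2 * ‖lam‖ * A + Q := by
          rw [norm_mul, norm_mul, Complex.norm_real, Complex.norm_real]
          norm_num [hA, hQ]
  -- A bound
  have hAle : A ≤ 2 * K * b ^ ν * a b := by
    calc A ≤ K * b ^ ν * a t := hactrl' t htIcc
      _ ≤ K * b ^ ν * ((4/3) * a b) := by
          apply mul_le_mul_of_nonneg_left hat_ub (by positivity)
      _ ≤ 2 * K * b ^ ν * a b := by
          have hm : 0 ≤ K * b ^ ν * a b :=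
            mul_nonneg (mul_nonneg hKpos.le hbνpos.le) hb4.le
          linarith [hm]
  have hAnn : 0 ≤ A := abs_nonneg _
  have hQnn : 0 ≤ Q := abs_nonneg _
  -- Q bound
  set Qs : ℝ := sSup ((fun t => |deriv q t|) '' Icc (b - d) (b + d)) with hQs
  have hQle : Q ≤ Qs :=
    le_csSup (isCompact_Icc.bddAbove_image
      ((hq.continuous_deriv le_rfl).abs.continuousOn)) ⟨t, htIcc, rfl⟩
  -- final computation
  set N : ℝ := ‖(-2 * lam * (Complex.ofReal (deriv a t)) - (Complex.ofReal (deriv q t)))‖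
    with hNdef
  have hNnn : 0 ≤ N := norm_nonneg _
  have hlhs : (‖
      ((-2 * lam * (Complex.ofReal (deriv a t)) - (Complex.ofReal (deriv q t)))
        / (2 * zeta ^ ((1:ℂ)/2)))‖) ^ 2 = N ^ 2 / (4 * ‖zeta‖) := by
    rw [norm_div, hden, div_pow, mul_pow]
    congr 1
    have : (‖zeta‖ ^ ((1:ℝ)/2)) ^ 2 = ‖zeta‖ := by
      rw [sq, ← Real.rpow_add habsz_pos]; norm_num
    rw [this]; ring
  rw [hlhs]
  have hb2ν : b ^ (2 * ν) = (b ^ ν) ^ 2 := by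
    rw [two_mul, Real.rpow_add hb0, sq]
  have hN2 : N ^ 2 ≤ 8 * ((a b) ^ 2 + (β b) ^ 2) * A ^ 2 + 2 * Q ^ 2 := by
    have h1 : N ^ 2 ≤ (2 * ‖lam‖ * A + Q) ^ 2 := by
      apply pow_le_pow_left₀ hNnn hnum
    have h2 : (2 * ‖lam‖ * A + Q) ^ 2
        ≤ 2 * ((2 * ‖lam‖ * A) ^ 2 + Q ^ 2) :=
      sq_add_le_aux _ _
    have h3 : (2 * ‖lam‖ * A) ^ 2 = 4 * ((a b) ^ 2 + (β b) ^ 2) * A ^ 2 := by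
      rw [mul_pow, mul_pow, hlamsq]; ring
    rw [h3] at h2
    linarith [h1, h2]
  have hdle : ((a b) ^ 2 + (β b) ^ 2) ≤ 4 * ‖zeta‖ := by linarith
  calc N ^ 2 / (4 * ‖zeta‖)
      ≤ (8 * ((a b) ^ 2 + (β b) ^ 2) * A ^ 2 + 2 * Q ^ 2) / ((a b) ^ 2 + (β b) ^ 2) :=
        div_le_div₀ (by positivity) hN2 hS hdle
    _ = 8 * A ^ 2 + 2 * Q ^ 2 / ((a b) ^ 2 + (β b) ^ 2) := by
        field_simp
    _ ≤ (32 * K ^ 2 + 2) * ((a b) ^ 2 * b ^ (2 * ν) + Qs ^ 2 / ((a b) ^ 2 + (β b) ^ 2)) := by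
        have hA2 : A ^ 2 ≤ 4 * K ^ 2 * (b ^ ν) ^ 2 * (a b) ^ 2 := by
          calc A ^ 2 ≤ (2 * K * b ^ ν * a b) ^ 2 := pow_le_pow_left₀ hAnn hAle 2
            _ = 4 * K ^ 2 * (b ^ ν) ^ 2 * (a b) ^ 2 := by ring
        have hQ2 : Q ^ 2 ≤ Qs ^ 2 := pow_le_pow_left₀ hQnn hQle 2
        have hQsdiv : Q ^ 2 / ((a b) ^ 2 + (β b) ^ 2) ≤ Qs ^ 2 / ((a b) ^ 2 + (β b) ^ 2) :=
          by gcongr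
        rw [hb2ν]
        have hX : (0:ℝ) ≤ (a b) ^ 2 * (b ^ ν) ^ 2 := by positivity
        have hY : (0:ℝ) ≤ Qs ^ 2 / ((a b) ^ 2 + (β b) ^ 2) :=
          div_nonneg (sq_nonneg Qs) hS.le
        have hA2' : A ^ 2 ≤ 4 * K ^ 2 * ((a b) ^ 2 * (b ^ ν) ^ 2) := by
          calc A ^ 2 ≤ 4 * K ^ 2 * (b ^ ν) ^ 2 * (a b) ^ 2 := hA2
            _ = 4 * K ^ 2 * ((a b) ^ 2 * (b ^ ν) ^ 2) := by ring
        rw [mul_div_assoc]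
        exact final_aux (A ^ 2) (Q ^ 2 / ((a b) ^ 2 + (β b) ^ 2))
          ((a b) ^ 2 * (b ^ ν) ^ 2) (K ^ 2) (Qs ^ 2 / ((a b) ^ 2 + (β b) ^ 2))
          hA2' hQsdiv hX hY (sq_nonneg K)
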